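/- In the breadth-first construction of a tree from particle positions and weights, let t(h) be the number of vertices at height ≤ h−1 and define the excursion F^exc(u) = F(y(1) + u mod 1) − F(y(1)−). Then for every h ≥ 1: (i) y(t(h)+1) − y(1) mod 1 = Σ_{v : ht(v) ≤ h−1} p_v, and (ii) F^exc(y(t(h)+1) − y(1) mod 1) = Σ_{v : ht(v) = h} p_v. That is, the excursion function evaluated at the cumulative weight of the first h−1 generations equals the total weight of generation h. -/

import Mathlib

open Set Finset

open scoped Classical in
/-- Breadth-first construction: with `t h` the number of vertices of height `≤ h-1`
and `Fexc` the shifted excursion `Fexc u = ∑ᵢ pᵢ 1{x'ᵢ ≤ u} - u` (where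
`x'ᵢ = Int.fract (xᵢ - x (v 0))`), for every `h ≥ 1`:
(i) `y (t h) - y 0 = ∑_{k < t h} p (v k)` equals the total weight of the vertices of
height `≤ h-1`, and (ii) `Fexc` evaluated there equals the total weight of the
vertices of height `h`. -/
theorem stmt8 (n : ℕ) (hn : 0 < n) (x p : Fin n → ℝ)
    (hx : ∀ i, x i ∈ Ico (0:ℝ) 1) (hxinj : Function.Injective x)
    (hp : ∀ i, 0 < p i) (hsum : ∑ i, p i = 1)
    (v : Fin n → Fin n) (hv : Function.Bijective v)
    (hord : StrictMono fun j : Fin n => Int.fract (x (v j) - x (v ⟨0, hn⟩)))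
    (hmin : ∀ w : Fin n, w ≠ v ⟨0, hn⟩ →
      (-(x (v ⟨0, hn⟩)) + ∑ i, if x i < x (v ⟨0, hn⟩) then p i else 0)
        < -(x w) + ∑ i, if x i < x w then p i else 0)
    (par : Fin n → Fin n)
    (hpar : ∀ j : Fin n, 0 < (j : ℕ) → ∃ k : Fin n, par (v j) = v k ∧
      Int.fract (x (v j) - x (v ⟨0, hn⟩)) ∈
        Ioo (∑ l ∈ Finset.Iio k, p (v l)) (∑ l ∈ Finset.Iic k, p (v l)))
    (ht : Fin n → ℕ)
    (hht0 : ht (v ⟨0, hn⟩) = 0)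
    (hhts : ∀ w : Fin n, w ≠ v ⟨0, hn⟩ → ht w = ht (par w) + 1)
    (t : ℕ → ℕ)
    (htdef : ∀ h : ℕ, t h = (Finset.univ.filter fun w : Fin n => ht w ≤ h - 1).card)
    (Fexc : ℝ → ℝ)
    (hFexc : ∀ u : ℝ, Fexc u =
      (∑ i, if Int.fract (x i - x (v ⟨0, hn⟩)) ≤ u then p i else 0) - u)
    (hnojump : ∀ j : ℕ, 1 ≤ j → j ≤ n → ∀ i : Fin n,
      Int.fract (x i - x (v ⟨0, hn⟩)) ≠
        ∑ k ∈ Finset.univ.filter (fun k : Fin n => (k : ℕ) < j), p (v k)) :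
    ∀ h : ℕ, 1 ≤ h →
      (∑ k ∈ Finset.univ.filter (fun k : Fin n => (k : ℕ) < t h), p (v k))
        = (∑ w ∈ Finset.univ.filter (fun w : Fin n => ht w ≤ h - 1), p w) ∧
      Fexc (∑ w ∈ Finset.univ.filter (fun w : Fin n => ht w ≤ h - 1), p w)
        = ∑ w ∈ Finset.univ.filter (fun w : Fin n => ht w = h), p w := by
  classical
  set v0 : Fin n := v ⟨0, hn⟩ with hv0def
  set a : Fin n → ℝ := fun i => Int.fract (x i - x v0) with hadef
  set y : ℕ → ℝ := fun m =>
    ∑ k ∈ Finset.univ.filter (fun k : Fin n => (k : ℕ) < m), p (v k) with hydef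
  -- monotonicity of y
  have ymono : ∀ {m1 m2 : ℕ}, m1 ≤ m2 → y m1 ≤ y m2 := by
    intro m1 m2 hm
    simp only [hydef]
    apply Finset.sum_le_sum_of_subset_of_nonneg
    · intro k hk
      simp only [Finset.mem_filter, Finset.mem_univ, true_and] at hk ⊢
      omega
    · intro i _ _; exact (hp _).le
  -- fract formula
  have hfract : ∀ w : Fin n,
      a w = x w - x v0 + (if x w < x v0 then (1:ℝ) else 0) := by
    intro w
    obtain ⟨hw0, hw1⟩ := hx w
    obtain ⟨h00, h01⟩ := hx v0
    simp only [hadef]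
    by_cases hlt : x w < x v0
    · rw [if_pos hlt, ← Int.fract_add_one (x w - x v0),
        Int.fract_eq_self.mpr ⟨by linarith, by linarith⟩]
    · push_neg at hlt
      rw [if_neg (not_lt.mpr hlt),
        Int.fract_eq_self.mpr ⟨by linarith, by linarith⟩, add_zero]
  -- per-term comparison identity
  have hterm : ∀ w i : Fin n,
      (if a i < a w then p i else 0) + (if x i < x v0 then p i else 0)
        = (if x i < x w then p i else 0) + (if x w < x v0 then p i else 0) := by
    intro w i
    obtain ⟨hi0, hi1⟩ := hx i
    obtain ⟨hw0, hw1⟩ := hx w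
    obtain ⟨h00, h01⟩ := hx v0
    have hai := hfract i
    have haw := hfract w
    by_cases h1 : x i < x v0 <;> by_cases h2 : x w < x v0
    · rw [if_pos h1] at hai; rw [if_pos h2] at haw
      rw [if_pos h1, if_pos h2]
      have hiff : a i < a w ↔ x i < x w := by
        rw [hai, haw]; constructor <;> intro <;> linarith
      simp only [hiff]
    · rw [if_pos h1] at hai; rw [if_neg h2] at haw
      push_neg at h2
      rw [if_pos h1, if_neg (not_lt.mpr h2), if_pos (lt_of_lt_of_le h1 h2)]
      have : ¬ a i < a w := by rw [hai, haw]; push_neg; linarith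
      rw [if_neg this]; ring
    · rw [if_neg h1] at hai; rw [if_pos h2] at haw
      push_neg at h1
      rw [if_neg (not_lt.mpr h1), if_pos h2,
        if_neg (not_lt.mpr (le_of_lt (lt_of_lt_of_le h2 h1)))]
      have : a i < a w := by rw [hai, haw]; linarith
      rw [if_pos this]; ring
    · rw [if_neg h1] at hai; rw [if_neg h2] at haw
      rw [if_neg h1, if_neg h2]
      have hiff : a i < a w ↔ x i < x w := by
        rw [hai, haw]; constructor <;> intro <;> linarith
      simp only [hiff]
  -- key identity relating the excursion to F
  have hkey : ∀ w : Fin n,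
      (∑ i, if a i < a w then p i else 0) - a w
        = (-(x w) + ∑ i, if x i < x w then p i else 0)
          - (-(x v0) + ∑ i, if x i < x v0 then p i else 0) := by
    intro w
    have hs : (∑ i, if a i < a w then p i else 0)
        + (∑ i, if x i < x v0 then p i else 0)
        = (∑ i, if x i < x w then p i else 0)
          + (∑ i, if x w < x v0 then p i else 0) := by
      rw [← Finset.sum_add_distrib, ← Finset.sum_add_distrib]
      exact Finset.sum_congr rfl fun i _ => hterm w i
    have hδ : (∑ i : Fin n, if x w < x v0 then p i else 0)
        = if x w < x v0 then (1:ℝ) else 0 := by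
      by_cases hc : x w < x v0 <;> simp [hc, hsum]
    rw [hδ] at hs
    have haw := hfract w
    by_cases hc : x w < x v0
    · rw [if_pos hc] at hs haw; linarith
    · rw [if_neg hc] at hs haw; linarith
  -- v j ≠ v0 for j ≥ 1
  have hvne : ∀ j : Fin n, 0 < (j : ℕ) → v j ≠ v0 := by
    intro j hj hcon
    have := hv.injective hcon
    have : (j : ℕ) = 0 := by rw [this]
    omega
  -- sum below a (v j) equals y j
  have hsumA : ∀ j : Fin n, (∑ i, if a i < a (v j) then p i else 0) = y (j : ℕ) := by
    intro j
    have hb := Fintype.sum_bijective v hv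
      (fun k => if a (v k) < a (v j) then p (v k) else 0)
      (fun i => if a i < a (v j) then p i else 0) (fun k => rfl)
    rw [← hb]
    simp only [hydef]
    rw [Finset.sum_filter]
    apply Finset.sum_congr rfl
    intro k _
    have hiff : a (v k) < a (v j) ↔ (k : ℕ) < (j : ℕ) := by
      simp only [hadef]
      exact ⟨fun hh => hord.lt_iff_lt.mp hh, fun hh => hord.lt_iff_lt.mpr hh⟩
    simp only [hiff]
  -- Claim A: a (v j) < y j for j ≥ 1
  have hClaimA : ∀ j : Fin n, 0 < (j : ℕ) → a (v j) < y (j : ℕ) := by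
    intro j hj
    have hm := hmin (v j) (hvne j hj)
    have hk := hkey (v j)
    have hs := hsumA j
    linarith
  -- parent indices via choice
  have hK : ∀ j : Fin n, 0 < (j : ℕ) → ∃ k : Fin n, par (v j) = v k ∧
      y (k : ℕ) < a (v j) ∧ a (v j) < y ((k : ℕ) + 1) := by
    intro j hj
    obtain ⟨k, hpk, hmem⟩ := hpar j hj
    have hIio : (Finset.Iio k) = Finset.univ.filter (fun l : Fin n => (l : ℕ) < (k : ℕ)) := by
      ext l
      simp only [Finset.mem_Iio, Finset.mem_filter, Finset.mem_univ, true_and, Fin.lt_def]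
    have hIic : (Finset.Iic k) = Finset.univ.filter (fun l : Fin n => (l : ℕ) < (k : ℕ) + 1) := by
      ext l
      simp only [Finset.mem_Iic, Finset.mem_filter, Finset.mem_univ, true_and, Fin.le_def]
      omega
    refine ⟨k, hpk, ?_, ?_⟩
    · have h1 := hmem.1
      rw [hIio] at h1
      simpa only [hydef, hadef] using h1
    · have h2 := hmem.2
      rw [hIic] at h2
      simpa only [hydef, hadef] using h2
  choose K hKpar hKlo hKhi using hK
  -- K j < j
  have hKlt : ∀ (j : Fin n) (hj : 0 < (j : ℕ)), ((K j hj : Fin n) : ℕ) < (j : ℕ) := by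
    intro j hj
    by_contra hcon
    push_neg at hcon
    have h1 := ymono hcon
    have h2 := hKlo j hj
    have h3 := hClaimA j hj
    linarith
  -- K monotone
  have hKmono : ∀ (j1 j2 : Fin n) (hj1 : 0 < (j1 : ℕ)) (hj2 : 0 < (j2 : ℕ)),
      (j1 : ℕ) ≤ (j2 : ℕ) → ((K j1 hj1 : Fin n) : ℕ) ≤ ((K j2 hj2 : Fin n) : ℕ) := by
    intro j1 j2 hj1 hj2 hle
    by_contra hcon
    push_neg at hcon
    have h1 : y ((K j2 hj2 : Fin n) : ℕ).succ ≤ y ((K j1 hj1 : Fin n) : ℕ) := ymono (by omega)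
    have h2 : a (v j1) ≤ a (v j2) := by
      simp only [hadef]
      exact hord.monotone (by exact Fin.mk_le_of_le_val hle |>.trans_eq rfl)
    have h3 := hKlo j1 hj1
    have h4 := hKhi j2 hj2
    simp only [Nat.succ_eq_add_one] at h1
    linarith
  -- heights recursion
  have hHs : ∀ (j : Fin n) (hj : 0 < (j : ℕ)),
      ht (v j) = ht (v (K j hj)) + 1 := by
    intro j hj
    rw [hhts (v j) (hvne j hj), hKpar j hj]
  -- heights monotone
  have hHmono : ∀ N : ℕ, ∀ j1 j2 : Fin n, (j2 : ℕ) ≤ N → (j1 : ℕ) ≤ (j2 : ℕ) →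
      ht (v j1) ≤ ht (v j2) := by
    intro N
    induction N with
    | zero =>
      intro j1 j2 h2 h12
      have : j1 = j2 := Fin.ext (by omega)
      rw [this]
    | succ N ihN =>
      intro j1 j2 h2 h12
      by_cases hj1 : (j1 : ℕ) = 0
      · have hj1' : j1 = ⟨0, hn⟩ := Fin.ext hj1
        rw [hj1']
        rw [show v ⟨0, hn⟩ = v0 from rfl, hht0]
        exact Nat.zero_le _
      · have hj1' : 0 < (j1 : ℕ) := Nat.pos_of_ne_zero hj1
        by_cases heq : (j1 : ℕ) = (j2 : ℕ)
        · have : j1 = j2 := Fin.ext heq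
          rw [this]
        · have hj2' : 0 < (j2 : ℕ) := by omega
          rw [hHs j1 hj1', hHs j2 hj2']
          have hkk := hKmono j1 j2 hj1' hj2' h12
          have hlt := hKlt j2 hj2'
          have := ihN (K j1 hj1') (K j2 hj2') (by omega) hkk
          omega
  -- downward-closed characterization
  have hsetc : ∀ c : ℕ, ∀ j : Fin n, ht (v j) ≤ c ↔
      (j : ℕ) < (Finset.univ.filter (fun l : Fin n => ht (v l) ≤ c)).card := by
    intro c j
    constructor
    · intro hj
      have hsub : Finset.Iic j ⊆ Finset.univ.filter (fun l : Fin n => ht (v l) ≤ c) := by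
        intro l hl
        simp only [Finset.mem_Iic] at hl
        simp only [Finset.mem_filter, Finset.mem_univ, true_and]
        exact le_trans (hHmono n l j (Nat.le_of_lt j.isLt) hl) hj
      have := Finset.card_le_card hsub
      rw [Fin.card_Iic] at this
      omega
    · intro hj
      by_contra hcon
      have hsub : Finset.univ.filter (fun l : Fin n => ht (v l) ≤ c) ⊆ Finset.Iio j := by
        intro l hl
        simp only [Finset.mem_filter, Finset.mem_univ, true_and] at hl
        simp only [Finset.mem_Iio]
        by_contra hge
        push_neg at hge
        exact hcon (le_trans (hHmono n j l (Nat.le_of_lt l.isLt) hge) hl)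
      have := Finset.card_le_card hsub
      rw [Fin.card_Iio] at this
      omega
  -- reindexing of cards
  have hcards : ∀ c : ℕ,
      (Finset.univ.filter (fun w : Fin n => ht w ≤ c)).card
        = (Finset.univ.filter (fun j : Fin n => ht (v j) ≤ c)).card := by
    intro c
    rw [Finset.card_filter, Finset.card_filter]
    exact (Fintype.sum_bijective v hv
      (fun j => if ht (v j) ≤ c then 1 else 0)
      (fun w => if ht w ≤ c then 1 else 0) (fun k => rfl)).symm
  -- main argument
  intro h hh
  have hth : t h = (Finset.univ.filter (fun j : Fin n => ht (v j) ≤ h - 1)).card := by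
    rw [htdef, hcards]
  have hiff1 : ∀ k : Fin n, ((k : ℕ) < t h) ↔ ht (v k) ≤ h - 1 := by
    intro k
    rw [hth]
    exact (hsetc (h - 1) k).symm
  -- part (i)
  have hre1 : (∑ w ∈ Finset.univ.filter (fun w : Fin n => ht w ≤ h - 1), p w)
      = ∑ j : Fin n, if ht (v j) ≤ h - 1 then p (v j) else 0 := by
    rw [Finset.sum_filter]
    exact (Fintype.sum_bijective v hv
      (fun j => if ht (v j) ≤ h - 1 then p (v j) else 0)
      (fun w => if ht w ≤ h - 1 then p w else 0) (fun k => rfl)).symm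
  have hi : (∑ k ∈ Finset.univ.filter (fun k : Fin n => (k : ℕ) < t h), p (v k))
      = ∑ w ∈ Finset.univ.filter (fun w : Fin n => ht w ≤ h - 1), p w := by
    rw [hre1, Finset.sum_filter]
    apply Finset.sum_congr rfl
    intro k _
    simp only [hiff1 k]
  refine ⟨hi, ?_⟩
  -- part (ii)
  have hS1 : (∑ w ∈ Finset.univ.filter (fun w : Fin n => ht w ≤ h - 1), p w) = y (t h) := by
    simp only [hydef]; exact hi.symm
  have hth1 : 1 ≤ t h := by
    rw [hth]
    have hmem : (⟨0, hn⟩ : Fin n) ∈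
        Finset.univ.filter (fun j : Fin n => ht (v j) ≤ h - 1) := by
      simp only [Finset.mem_filter, Finset.mem_univ, true_and]
      rw [show v ⟨0, hn⟩ = v0 from rfl, hht0]
      exact Nat.zero_le _
    exact Finset.card_pos.mpr ⟨_, hmem⟩
  have hthn : t h ≤ n := by
    rw [hth]
    simpa using Finset.card_filter_le Finset.univ (fun j : Fin n => ht (v j) ≤ h - 1)
  have hnoj : ∀ i : Fin n, a i ≠ y (t h) := by
    intro i
    simpa only [hadef, hydef] using hnojump (t h) hth1 hthn i
  have hu0 : a v0 = 0 := by
    simp only [hadef]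
    rw [sub_self, Int.fract_zero]
  have hy1 : 0 < y (t h) := by
    have h1 : y 1 = p (v ⟨0, hn⟩) := by
      simp only [hydef]
      have hfe : Finset.univ.filter (fun k : Fin n => (k : ℕ) < 1) = {(⟨0, hn⟩ : Fin n)} := by
        ext l
        simp only [Finset.mem_filter, Finset.mem_univ, true_and, Finset.mem_singleton,
          Fin.ext_iff]
        omega
      rw [hfe, Finset.sum_singleton]
    have h2 := ymono hth1
    have h3 := hp (v ⟨0, hn⟩)
    linarith
  have hcond2 : ∀ j : Fin n, (a (v j) ≤ y (t h)) ↔ ht (v j) ≤ h := by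
    intro j
    have hne := hnoj (v j)
    constructor
    · intro hle
      have hlt : a (v j) < y (t h) := lt_of_le_of_ne hle hne
      by_cases hj : (j : ℕ) = 0
      · have : j = ⟨0, hn⟩ := Fin.ext hj
        rw [this, show v ⟨0, hn⟩ = v0 from rfl, hht0]
        omega
      · have hj' : 0 < (j : ℕ) := Nat.pos_of_ne_zero hj
        have hKh : ((K j hj' : Fin n) : ℕ) < t h := by
          by_contra hge
          push_neg at hge
          have := ymono hge
          have := hKlo j hj'
          linarith
        have hht' : ht (v (K j hj')) ≤ h - 1 := (hiff1 _).mp hKh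
        rw [hHs j hj']
        omega
    · intro hhtj
      by_cases hj : (j : ℕ) = 0
      · have : j = ⟨0, hn⟩ := Fin.ext hj
        rw [this, show v ⟨0, hn⟩ = v0 from rfl, hu0]
        exact hy1.le
      · have hj' : 0 < (j : ℕ) := Nat.pos_of_ne_zero hj
        have h1 : ht (v (K j hj')) ≤ h - 1 := by
          rw [hHs j hj'] at hhtj
          omega
        have h2 : ((K j hj' : Fin n) : ℕ) < t h := (hiff1 _).mpr h1
        have h3 : y (((K j hj' : Fin n) : ℕ) + 1) ≤ y (t h) := ymono (by omega)
        have h4 := hKhi j hj'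
        linarith
  have hre2 : (∑ w ∈ Finset.univ.filter (fun w : Fin n => ht w ≤ h), p w)
      = ∑ j : Fin n, if ht (v j) ≤ h then p (v j) else 0 := by
    rw [Finset.sum_filter]
    exact (Fintype.sum_bijective v hv
      (fun j => if ht (v j) ≤ h then p (v j) else 0)
      (fun w => if ht w ≤ h then p w else 0) (fun k => rfl)).symm
  have hS2 : (∑ i, if a i ≤ y (t h) then p i else 0)
      = ∑ w ∈ Finset.univ.filter (fun w : Fin n => ht w ≤ h), p w := by
    rw [hre2]
    have hb := Fintype.sum_bijective v hv
      (fun j => if a (v j) ≤ y (t h) then p (v j) else 0)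
      (fun i => if a i ≤ y (t h) then p i else 0) (fun k => rfl)
    rw [← hb]
    apply Finset.sum_congr rfl
    intro j _
    simp only [hcond2 j]
  have hsplit : (∑ w ∈ Finset.univ.filter (fun w : Fin n => ht w ≤ h), p w)
      = (∑ w ∈ Finset.univ.filter (fun w : Fin n => ht w ≤ h - 1), p w)
        + (∑ w ∈ Finset.univ.filter (fun w : Fin n => ht w = h), p w) := by
    rw [Finset.sum_filter, Finset.sum_filter, Finset.sum_filter, ← Finset.sum_add_distrib]
    apply Finset.sum_congr rfl
    intro w _
    by_cases h1 : ht w ≤ h - 1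
    · rw [if_pos (by omega), if_pos h1, if_neg (by omega)]; ring
    · by_cases h2 : ht w = h
      · rw [if_pos (by omega), if_neg h1, if_pos h2]; ring
      · rw [if_neg (by omega), if_neg h1, if_neg h2]; ring
  rw [hFexc]
  have hS2' := hS2
  simp only [hadef] at hS2'
  rw [hS1, hS2']
  rw [hsplit, hS1]
  ring
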